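/- Let G ∈ ℝ^{n×n} and let G = UΣVᵀ be a singular value decomposition (U, V ∈ ℝ^{n×n} orthogonal, Σ diagonal with nonnegative entries), and let λ > 0. Then the matrix ΔW* = −(trace(Σ)/λ)·UVᵀ is a global minimizer of the function ΔW ↦ ⟨G, ΔW⟩_F + (λ/2)‖ΔW‖²_{ℓ₂→ℓ₂} over ℝ^{n×n}, and the minimum value equals −trace(Σ)²/(2λ). -/
import Mathlib


noncomputable section

open Matrix

/-- The `ℓ₂ → ℓ₂` operator norm of a matrix: `sup_{‖x‖₂ = 1} ‖Mx‖₂`. -/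
def l2OpNorm {n : ℕ} (M : Matrix (Fin n) (Fin n) ℝ) : ℝ :=
  sSup {c : ℝ | ∃ x : Fin n → ℝ,
    Real.sqrt (∑ i, x i ^ 2) = 1 ∧ c = Real.sqrt (∑ i, (M.mulVec x i) ^ 2)}

/-- Orthogonal matrices preserve the squared euclidean norm. -/
lemma aux_preserve {n : ℕ} {Q : Matrix (Fin n) (Fin n) ℝ} (hQ : Qᵀ * Q = 1)
    (x : Fin n → ℝ) : ∑ i, (Q.mulVec x i) ^ 2 = ∑ i, x i ^ 2 := by
  have h1 : ∑ i, (Q.mulVec x i) ^ 2 = Q.mulVec x ⬝ᵥ Q.mulVec x := by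
    simp [dotProduct, sq]
  have h2 : Q.mulVec x ⬝ᵥ Q.mulVec x = x ⬝ᵥ x := by
    rw [Matrix.dotProduct_mulVec, ← Matrix.mulVec_transpose, Matrix.mulVec_mulVec, hQ,
      Matrix.one_mulVec]
  rw [h1, h2]
  simp [dotProduct, sq]

/-- Boundedness of the defining set of `l2OpNorm`. -/
lemma aux_bdd {n : ℕ} (M : Matrix (Fin n) (Fin n) ℝ) :
    BddAbove {c : ℝ | ∃ x : Fin n → ℝ,
      Real.sqrt (∑ i, x i ^ 2) = 1 ∧ c = Real.sqrt (∑ i, (M.mulVec x i) ^ 2)} := by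
  refine ⟨Real.sqrt (∑ i, ∑ j, M i j ^ 2), ?_⟩
  rintro c ⟨x, hx, rfl⟩
  have hx1 : ∑ i, x i ^ 2 = 1 := Real.sqrt_eq_one.mp hx
  apply Real.sqrt_le_sqrt
  apply Finset.sum_le_sum
  intro i _
  have h := Finset.sum_mul_sq_le_sq_mul_sq Finset.univ (fun j => M i j) x
  rw [hx1, mul_one] at h
  simpa [Matrix.mulVec, dotProduct] using h

lemma aux_le {n : ℕ} (M : Matrix (Fin n) (Fin n) ℝ) (x : Fin n → ℝ)
    (hx : Real.sqrt (∑ i, x i ^ 2) = 1) :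
    Real.sqrt (∑ i, (M.mulVec x i) ^ 2) ≤ l2OpNorm M :=
  le_csSup (aux_bdd M) ⟨x, hx, rfl⟩

lemma aux_nonneg {n : ℕ} (M : Matrix (Fin n) (Fin n) ℝ) : 0 ≤ l2OpNorm M :=
  Real.sSup_nonneg (by rintro c ⟨x, hx, rfl⟩; exact Real.sqrt_nonneg _)

/-- Cauchy–Schwarz in the needed form. -/
lemma aux_cs (n : ℕ) (u y : Fin n → ℝ) (hu : ∑ j, u j ^ 2 = 1) :
    -(Real.sqrt (∑ i, y i ^ 2)) ≤ ∑ j, u j * y j := by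
  have h := Real.sum_mul_le_sqrt_mul_sqrt Finset.univ (fun j => -(u j)) y
  have h2 : ∑ j, (-(u j)) ^ 2 = 1 := by simpa using hu
  rw [h2, Real.sqrt_one, one_mul] at h
  have h3 : ∑ j, -(u j) * y j = -∑ j, u j * y j := by simp
  rw [h3] at h
  linarith

theorem stmt19 {n : ℕ} (G U V : Matrix (Fin n) (Fin n) ℝ) (d : Fin n → ℝ)
    (hU : Uᵀ * U = 1) (hU' : U * Uᵀ = 1) (hV : Vᵀ * V = 1) (hV' : V * Vᵀ = 1)
    (hd : ∀ i, 0 ≤ d i) (hG : G = U * Matrix.diagonal d * Vᵀ)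
    (lam : ℝ) (hlam : 0 < lam)
    (F : Matrix (Fin n) (Fin n) ℝ → ℝ)
    (hF : F = fun ΔW => (Gᵀ * ΔW).trace + lam / 2 * l2OpNorm ΔW ^ 2)
    (Wstar : Matrix (Fin n) (Fin n) ℝ)
    (hWstar : Wstar = -((Matrix.diagonal d).trace / lam) • (U * Vᵀ)) :
    (∀ ΔW : Matrix (Fin n) (Fin n) ℝ, F Wstar ≤ F ΔW) ∧
      F Wstar = -(Matrix.diagonal d).trace ^ 2 / (2 * lam) := by
  set t : ℝ := (Matrix.diagonal d).trace with ht_def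
  have htsum : t = ∑ i, d i := by rw [ht_def, Matrix.trace_diagonal]
  have ht0 : 0 ≤ t := by
    rw [htsum]; exact Finset.sum_nonneg fun i _ => hd i
  -- columns of U and V are unit vectors
  have hcolU : ∀ i : Fin n, ∑ j, (U j i) ^ 2 = 1 := by
    intro i
    have h : (Uᵀ * U) i i = (1 : Matrix (Fin n) (Fin n) ℝ) i i := by rw [hU]
    simpa [Matrix.mul_apply, Matrix.one_apply, sq] using h
  have hcolV : ∀ i : Fin n, ∑ j, (V j i) ^ 2 = 1 := by
    intro i
    have h : (Vᵀ * V) i i = (1 : Matrix (Fin n) (Fin n) ℝ) i i := by rw [hV]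
    simpa [Matrix.mul_apply, Matrix.one_apply, sq] using h
  have hGT : Gᵀ = V * Matrix.diagonal d * Uᵀ := by
    rw [hG]
    simp [Matrix.transpose_mul, Matrix.diagonal_transpose, Matrix.mul_assoc]
  -- trace formula
  have htrace : ∀ ΔW : Matrix (Fin n) (Fin n) ℝ,
      (Gᵀ * ΔW).trace = ∑ i, d i * ((Uᵀ * ΔW * V) i i) := by
    intro ΔW
    have h : (Gᵀ * ΔW).trace = (Matrix.diagonal d * (Uᵀ * ΔW * V)).trace := by
      rw [hGT]
      rw [show V * Matrix.diagonal d * Uᵀ * ΔW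
            = V * (Matrix.diagonal d * (Uᵀ * ΔW)) by noncomm_ring]
      rw [Matrix.trace_mul_comm]
      congr 1
      noncomm_ring
    rw [h]
    simp [Matrix.trace, Matrix.diag, Matrix.diagonal_mul]
  -- each diagonal entry of UᵀΔWV is at least -‖ΔW‖
  have hMi : ∀ (ΔW : Matrix (Fin n) (Fin n) ℝ) (i : Fin n),
      -(l2OpNorm ΔW) ≤ (Uᵀ * ΔW * V) i i := by
    intro ΔW i
    set y : Fin n → ℝ := ΔW.mulVec (fun k => V k i) with hy
    have hMeq : (Uᵀ * ΔW * V) i i = ∑ j, U j i * y j := by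
      calc (Uᵀ * ΔW * V) i i = ∑ k, ∑ j, U j i * ΔW j k * V k i := by
            simp [Matrix.mul_apply, Finset.sum_mul]
        _ = ∑ j, ∑ k, U j i * ΔW j k * V k i := Finset.sum_comm
        _ = ∑ j, U j i * y j := by
            simp [hy, Matrix.mulVec, dotProduct, Finset.mul_sum, mul_assoc]
    have hcs := aux_cs n (fun j => U j i) y (hcolU i)
    have hyle : Real.sqrt (∑ j, y j ^ 2) ≤ l2OpNorm ΔW := by
      apply aux_le ΔW (fun k => V k i)
      rw [hcolV i, Real.sqrt_one]
    rw [hMeq]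
    linarith
  -- lower bound on the trace term
  have hlower : ∀ ΔW : Matrix (Fin n) (Fin n) ℝ,
      -(t * l2OpNorm ΔW) ≤ (Gᵀ * ΔW).trace := by
    intro ΔW
    rw [htrace ΔW]
    have h := Finset.sum_le_sum
      (fun i (_ : i ∈ Finset.univ) =>
        mul_le_mul_of_nonneg_left (hMi ΔW i) (hd i))
    have heq : -(t * l2OpNorm ΔW) = ∑ i, d i * (-(l2OpNorm ΔW)) := by
      rw [htsum, ← Finset.sum_mul]
      ring
    linarith [heq ▸ h]
  -- global lower bound on F
  have hge : ∀ ΔW : Matrix (Fin n) (Fin n) ℝ, -t ^ 2 / (2 * lam) ≤ F ΔW := by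
    intro ΔW
    rw [hF]
    simp only
    have hs0 := aux_nonneg ΔW
    have h1 := hlower ΔW
    rw [div_le_iff₀ (by positivity : (0:ℝ) < 2 * lam)]
    nlinarith [sq_nonneg (lam * l2OpNorm ΔW - t)]
  -- orthogonality of Q = U Vᵀ
  have hQ : (U * Vᵀ)ᵀ * (U * Vᵀ) = 1 := by
    rw [Matrix.transpose_mul, Matrix.transpose_transpose, mul_assoc,
      ← mul_assoc Uᵀ, hU, one_mul, hV']
  -- operator norm of Wstar is at most t/lam
  have hsW : l2OpNorm Wstar ≤ t / lam := by
    apply Real.sSup_le _ (by positivity)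
    rintro c ⟨x, hx, rfl⟩
    have hx1 : ∑ i, x i ^ 2 = 1 := Real.sqrt_eq_one.mp hx
    have hsum : ∑ i, (Wstar.mulVec x i) ^ 2 = (t / lam) ^ 2 := by
      rw [hWstar, Matrix.smul_mulVec]
      calc ∑ i, ((-(t / lam)) • (U * Vᵀ).mulVec x) i ^ 2
          = (t / lam) ^ 2 * ∑ i, ((U * Vᵀ).mulVec x i) ^ 2 := by
            rw [Finset.mul_sum]
            refine Finset.sum_congr rfl fun i _ => ?_
            simp [Pi.smul_apply, smul_eq_mul]
            ring
        _ = (t / lam) ^ 2 := by rw [aux_preserve hQ, hx1, mul_one]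
    rw [hsum, Real.sqrt_sq (by positivity)]
  -- trace at Wstar
  have htrW : (Gᵀ * Wstar).trace = -(t ^ 2 / lam) := by
    rw [hWstar, Matrix.mul_smul, Matrix.trace_smul, hGT]
    have hm : V * Matrix.diagonal d * Uᵀ * (U * Vᵀ) = V * Matrix.diagonal d * Vᵀ := by
      rw [mul_assoc (V * Matrix.diagonal d), ← mul_assoc Uᵀ, hU, one_mul]
    rw [hm, Matrix.trace_mul_comm, ← mul_assoc, hV, one_mul]
    rw [← ht_def]
    simp [smul_eq_mul]
    ring
  -- upper bound on F Wstar
  have hle : F Wstar ≤ -t ^ 2 / (2 * lam) := by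
    rw [hF]
    simp only
    have hsW0 := aux_nonneg Wstar
    have h2 : l2OpNorm Wstar ^ 2 ≤ (t / lam) ^ 2 := pow_le_pow_left₀ hsW0 hsW 2
    have h3 : lam / 2 * l2OpNorm Wstar ^ 2 ≤ lam / 2 * (t / lam) ^ 2 :=
      mul_le_mul_of_nonneg_left h2 (by positivity)
    have h4 : -(t ^ 2 / lam) + lam / 2 * (t / lam) ^ 2 = -t ^ 2 / (2 * lam) := by
      field_simp
      ring
    rw [htrW]
    linarith
  have heq : F Wstar = -t ^ 2 / (2 * lam) := le_antisymm hle (hge Wstar)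
  exact ⟨fun ΔW => heq ▸ hge ΔW, heq⟩

end
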